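/- arXiv:1503.04251 — 3 statements merged into one kernel-verified Lean document; each statement's English description precedes it below -/
import Mathlib

section
/- Let α, β, t, d be real numbers with β ≥ 0, α > β + 1, t > 0, d > 0 and t·d^α > 1. Then ∫_d^∞ u^β/(1 + t·u^α) du = (d^{−(α−β−1)}/(t·(α−β−1))) · ₂F₁(1, 1 − (β+1)/α; 2 − (β+1)/α; −1/(t·d^α)). (This is the paper's identity ρ₂(α,β,t,d) = ∫_d^∞ u^β/(1+t u^α) du, valid under the paper's stated condition α > β+1.) -/
open MeasureTheory

/-- The real Gaussian (ordinary) hypergeometric function, defined by its power series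
`₂F₁(a, b; c; z) = Σ_{n=0}^∞ ((a)_n (b)_n / ((c)_n n!)) z^n`,
where `(x)_n` is the rising Pochhammer symbol. -/
noncomputable def twoF1 (a b c z : ℝ) : ℝ :=
  ∑' n : ℕ, ((ascPochhammer ℝ n).eval a * (ascPochhammer ℝ n).eval b /
      ((ascPochhammer ℝ n).eval c * (n.factorial : ℝ))) * z ^ n

private lemma asc_pos {b : ℝ} (hb : 0 < b) (n : ℕ) : 0 < (ascPochhammer ℝ n).eval b := by
  induction n with
  | zero => simp
  | succ n ih =>
    rw [ascPochhammer_succ_eval]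
    have : (0:ℝ) < b + n := by positivity
    exact mul_pos ih this

private lemma asc_ratio (b : ℝ) (n : ℕ) :
    (ascPochhammer ℝ n).eval b * (b + n) = b * (ascPochhammer ℝ n).eval (b + 1) := by
  induction n with
  | zero => simp
  | succ n ih =>
    rw [ascPochhammer_succ_eval, ascPochhammer_succ_eval]
    push_cast
    linear_combination (b + (n:ℝ) + 1) * ih

/-- `∫_d^∞ u^β/(1 + t·u^α) du
      = (d^{−(α−β−1)}/(t·(α−β−1))) · ₂F₁(1, 1−(β+1)/α; 2−(β+1)/α; −1/(t·d^α))`. -/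
theorem rho2_eq_hypergeometric (α β t d : ℝ) (hβ : 0 ≤ β) (hα : β + 1 < α) (ht : 0 < t)
    (hd : 0 < d) (h : 1 < t * d ^ α) :
    ∫ u in Set.Ioi d, u ^ β / (1 + t * u ^ α) =
      (d ^ (-(α - β - 1)) / (t * (α - β - 1))) *
        twoF1 1 (1 - (β + 1) / α) (2 - (β + 1) / α) (-(1 / (t * d ^ α))) := by
  have hα0 : (0:ℝ) < α := by linarith
  have hαβ : (0:ℝ) < α - β - 1 := by linarith
  have htd : (0:ℝ) < t * d ^ α := lt_trans one_pos h
  have hdα : (0:ℝ) < d ^ α := Real.rpow_pos_of_pos hd α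
  set F : ℕ → ℝ → ℝ := fun n u => (-1:ℝ)^n * (t^(n+1))⁻¹ * u ^ (β - α*((n:ℝ)+1)) with hF
  have hD : ∀ n : ℕ, (0:ℝ) < α * ((n:ℝ)+1) - β - 1 := by
    intro n
    have hn : (0:ℝ) ≤ n := Nat.cast_nonneg n
    nlinarith
  have hp : ∀ n : ℕ, β - α*((n:ℝ)+1) < -1 := by
    intro n; have := hD n; linarith
  -- integral of each term
  have hint : ∀ n : ℕ, ∫ u in Set.Ioi d, F n u
      = (-1:ℝ)^n * (t^(n+1))⁻¹ * (d ^ (β - α*((n:ℝ)+1) + 1) / (α*((n:ℝ)+1) - β - 1)) := by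
    intro n
    rw [hF]
    rw [MeasureTheory.integral_const_mul, integral_Ioi_rpow_of_lt (hp n) hd]
    rw [neg_div, ← div_neg]
    ring_nf
  have hIntgr : ∀ n : ℕ, IntegrableOn (F n) (Set.Ioi d) := by
    intro n
    exact (integrableOn_Ioi_rpow_of_lt (hp n) hd).const_mul _
  -- pointwise series expansion
  have hpt : ∀ u ∈ Set.Ioi d, u ^ β / (1 + t * u ^ α) = ∑' n, F n u := by
    intro u hu
    have hu0 : 0 < u := lt_trans hd hu
    have huα : 0 < t * u^α := mul_pos ht (Real.rpow_pos_of_pos hu0 α)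
    have hx1 : 1 < t * u^α := by
      have : d ^ α ≤ u ^ α := Real.rpow_le_rpow hd.le (le_of_lt hu) hα0.le
      nlinarith
    set x := t * u^α with hxdef
    have hr : |(-x⁻¹)| < 1 := by
      rw [abs_neg, abs_of_nonneg (inv_nonneg.2 huα.le)]
      exact inv_lt_one_of_one_lt₀ hx1
    have hsum : ∑' n : ℕ, (-x⁻¹)^n = (1 - (-x⁻¹))⁻¹ := tsum_geometric_of_abs_lt_one hr
    have key : u ^ β / (1 + x) = ∑' n : ℕ, u^β * x⁻¹ * (-x⁻¹)^n := by
      rw [tsum_mul_left, hsum]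
      have hx0 : x ≠ 0 := huα.ne'
      have h2 : (1:ℝ) - -x⁻¹ = (1 + x) / x := by
        rw [sub_neg_eq_add, add_div, div_self hx0, one_div, add_comm]
      rw [h2, inv_div]
      calc u ^ β / (1 + x) = u ^ β * (x⁻¹ * x) / (1 + x) := by
            rw [inv_mul_cancel₀ hx0, mul_one]
        _ = u^β * x⁻¹ * (x / (1+x)) := by ring
    rw [key]
    refine tsum_congr fun n => ?_
    have hxpow : x^(n+1) = t^(n+1) * u^(α*((n:ℝ)+1)) := by
      rw [hxdef, mul_pow]
      congr 1
      rw [← Real.rpow_natCast (u^α) (n+1), ← Real.rpow_mul hu0.le]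
      push_cast
      ring_nf
    have hx0 : x ≠ 0 := huα.ne'
    have huc : (0:ℝ) < u^(α*((n:ℝ)+1)) := Real.rpow_pos_of_pos hu0 _
    have hrw : u ^ (β - α*((n:ℝ)+1)) = u ^ β / u ^ (α*((n:ℝ)+1)) := Real.rpow_sub hu0 _ _
    show u^β * x⁻¹ * (-x⁻¹)^n = (-1:ℝ)^n * (t^(n+1))⁻¹ * u ^ (β - α*((n:ℝ)+1))
    rw [hrw, neg_pow, inv_pow]
    have hxn : x ^ n ≠ 0 := pow_ne_zero n hx0
    have htn : (t:ℝ)^(n+1) ≠ 0 := pow_ne_zero _ ht.ne'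
    field_simp
    rw [← pow_succ' x n]  -- x * x^n = x^(n+1) ?
    rw [hxpow]
  -- summability of norms
  set r : ℝ := (t * d^α)⁻¹ with hrdef
  have hr0 : 0 ≤ r := inv_nonneg.2 htd.le
  have hr1 : r < 1 := inv_lt_one_of_one_lt₀ h
  have hdsplit : ∀ n : ℕ, d ^ (β - α*((n:ℝ)+1) + 1) = d ^ (β+1-α) * ((d^α)^n)⁻¹ := by
    intro n
    rw [← Real.rpow_natCast (d^α) n, ← Real.rpow_mul hd.le, ← Real.rpow_neg hd.le,
      ← Real.rpow_add hd]
    ring_nf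
  have hnorm : ∀ n : ℕ, ∫ u in Set.Ioi d, ‖F n u‖
      = (t^(n+1))⁻¹ * (d ^ (β - α*((n:ℝ)+1) + 1) / (α*((n:ℝ)+1) - β - 1)) := by
    intro n
    have : ∀ u ∈ Set.Ioi d, ‖F n u‖ = (t^(n+1))⁻¹ * u ^ (β - α*((n:ℝ)+1)) := by
      intro u hu
      have hu0 : 0 < u := lt_trans hd hu
      have h1 : (0:ℝ) < u ^ (β - α*((n:ℝ)+1)) := Real.rpow_pos_of_pos hu0 _
      have h2 : (0:ℝ) < (t^(n+1))⁻¹ := by positivity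
      rw [hF]
      simp only [norm_mul, norm_pow, norm_neg, norm_one, one_pow, one_mul,
        Real.norm_of_nonneg h1.le, Real.norm_of_nonneg h2.le]
    rw [setIntegral_congr_fun measurableSet_Ioi this, MeasureTheory.integral_const_mul,
      integral_Ioi_rpow_of_lt (hp n) hd]
    rw [neg_div, ← div_neg]
    ring_nf
  have hsummable : Summable fun n : ℕ => ∫ u in Set.Ioi d, ‖F n u‖ := by
    refine Summable.of_nonneg_of_le (fun n => ?_) (fun n => ?_)
      (((summable_geometric_of_lt_one hr0 hr1).mul_left (t⁻¹ * d ^ (β+1-α) / (α - β - 1))))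
    · rw [hnorm n]
      have := hD n
      have h1 : (0:ℝ) < d ^ (β - α*((n:ℝ)+1) + 1) := Real.rpow_pos_of_pos hd _
      positivity
    · rw [hnorm n, hdsplit n]
      have hDn := hD n
      have hdb : (0:ℝ) < d ^ (β+1-α) := Real.rpow_pos_of_pos hd _
      have hdan : (0:ℝ) < (d^α)^n := pow_pos hdα n
      have htn : (0:ℝ) < t^n := pow_pos ht n
      have hrn : r^n = ((t*d^α)^n)⁻¹ := by rw [hrdef, inv_pow]
      rw [hrn, mul_pow, pow_succ']
      have e3 : (t * t^n)⁻¹ * (d ^ (β+1-α) * ((d^α)^n)⁻¹ / (α*((n:ℝ)+1) - β - 1))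
          = d ^ (β+1-α) / (t * t^n * (d^α)^n * (α*((n:ℝ)+1) - β - 1)) := by
        field_simp
      have e4 : t⁻¹ * d ^ (β+1-α) / (α - β - 1) * (t^n * (d^α)^n)⁻¹
          = d ^ (β+1-α) / (t * t^n * (d^α)^n * (α - β - 1)) := by
        field_simp
      rw [e3, e4]
      have hn : (0:ℝ) ≤ n := Nat.cast_nonneg n
      gcongr
      nlinarith [mul_nonneg hα0.le hn]
  -- put LHS together
  rw [setIntegral_congr_fun measurableSet_Ioi hpt,
    ← MeasureTheory.integral_tsum_of_summable_integral_norm (fun n => hIntgr n) hsummable]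
  -- RHS series
  set b : ℝ := (α - β - 1)/α with hbdef
  have hb0 : 0 < b := div_pos hαβ hα0
  set z : ℝ := -(1/(t * d^α)) with hz
  have e1 : 1-(β+1)/α = b := by rw [hbdef]; field_simp; ring
  have e2 : 2-(β+1)/α = b+1 := by rw [hbdef]; field_simp; ring
  rw [e1, e2, twoF1]
  rw [← tsum_mul_left]
  refine tsum_congr fun n => ?_
  rw [hint n, ascPochhammer_eval_one]
  have h1 := asc_ratio b n
  have h2 : 0 < (ascPochhammer ℝ n).eval (b+1) := asc_pos (by linarith) n
  have h3 : (0:ℝ) < b + n := by positivity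
  have hfac : (0:ℝ) < (n.factorial : ℝ) := by
    exact_mod_cast n.factorial_pos
  have hterm : (n.factorial : ℝ) * (ascPochhammer ℝ n).eval b /
      ((ascPochhammer ℝ n).eval (b+1) * (n.factorial : ℝ)) = b/(b+↑n) := by
    rw [mul_comm ((ascPochhammer ℝ n).eval (b+1)) _, mul_div_mul_left _ _ hfac.ne',
      div_eq_div_iff h2.ne' h3.ne']
    linarith [h1]
  rw [hterm]
  -- final algebraic identity
  have hzn : z^n = (-1:ℝ)^n * ((t*d^α)^n)⁻¹ := by
    rw [hz, one_div, neg_pow, inv_pow]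
  have hbn : b + (n:ℝ) = (α*((n:ℝ)+1) - β - 1)/α := by
    rw [hbdef]; field_simp; ring
  have hda : d ^ (-(α-β-1)) = d ^ (β+1-α) := by
    congr 1; ring
  rw [hzn, hbn, hda, hdsplit n, hbdef, mul_pow, pow_succ']
  have hDn := hD n
  have hdb : (0:ℝ) < d ^ (β+1-α) := Real.rpow_pos_of_pos hd _
  have hdan : (0:ℝ) < (d^α)^n := pow_pos hdα n
  have htn : (0:ℝ) < t^n := pow_pos ht n
  field_simp
end

section
/- Let α, β, t, d be real numbers with β ≥ 0, α > β + 1, t > 0, d > 0 and t·d^α > 1. Then ∫_d^∞ u^β/(1 + t·u^α) du = Σ_{n=0}^∞ (−1)^n · t^{−(n+1)} · d^{β+1−α(n+1)}/(α(n+1) − β − 1), where the series on the right converges absolutely. -/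
open MeasureTheory Real Set

/-- Key algebraic identity for the terms of the expansion. -/
lemma rho2_key (t v α β : ℝ) (ht : 0 < t) (hv : 0 < v) (n : ℕ) :
    t ^ (-((n : ℝ) + 1)) * v ^ (β - α * ((n : ℝ) + 1)) =
      v ^ β * ((t * v ^ α) ^ (n + 1))⁻¹ := by
  have h1 : t ^ (-((n : ℝ) + 1)) = (t ^ (n + 1))⁻¹ := by
    rw [Real.rpow_neg ht.le, ← Real.rpow_natCast t (n + 1)]
    push_cast; ring_nf
  have h2 : v ^ (β - α * ((n : ℝ) + 1)) = v ^ β * ((v ^ α) ^ (n + 1))⁻¹ := by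
    have h3 : v ^ (α * ((n : ℝ) + 1)) = (v ^ α) ^ (n + 1) := by
      rw [Real.rpow_mul hv.le, ← Real.rpow_natCast (v ^ α) (n + 1)]
      push_cast; ring_nf
    rw [Real.rpow_sub hv, h3, div_eq_mul_inv]
  rw [h1, h2, mul_pow, mul_inv]
  ring

/-- Term-by-term integration of the tail expansion of `u^β/(1+t u^α)`:
`∫_d^∞ u^β/(1 + t·u^α) du = Σ_{n=0}^∞ (−1)^n · t^{−(n+1)} · d^{β+1−α(n+1)}/(α(n+1)−β−1)`,
the series converging absolutely. -/
theorem rho2_eq_series (α β t d : ℝ) (hβ : 0 ≤ β) (hα : β + 1 < α) (ht : 0 < t)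
    (hd : 0 < d) (h : 1 < t * d ^ α) :
    Summable (fun n : ℕ =>
        |(-1 : ℝ) ^ n * t ^ (-((n : ℝ) + 1)) * d ^ (β + 1 - α * ((n : ℝ) + 1)) /
          (α * ((n : ℝ) + 1) - β - 1)|) ∧
    ∫ u in Set.Ioi d, u ^ β / (1 + t * u ^ α) =
      ∑' n : ℕ, (-1 : ℝ) ^ n * t ^ (-((n : ℝ) + 1)) * d ^ (β + 1 - α * ((n : ℝ) + 1)) /
        (α * ((n : ℝ) + 1) - β - 1) := by
  have hα0 : (0 : ℝ) < α := by linarith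
  have hαβ : (0 : ℝ) < α - β - 1 := by linarith
  set a : ℕ → ℝ := fun n =>
    (-1 : ℝ) ^ n * t ^ (-((n : ℝ) + 1)) * d ^ (β + 1 - α * ((n : ℝ) + 1)) /
      (α * ((n : ℝ) + 1) - β - 1) with ha
  set F : ℕ → ℝ → ℝ := fun n u =>
    (-1 : ℝ) ^ n * t ^ (-((n : ℝ) + 1)) * u ^ (β - α * ((n : ℝ) + 1)) with hF
  set r : ℝ := (t * d ^ α)⁻¹ with hr
  have hr0 : 0 < r := inv_pos.mpr (by positivity)
  have hr1 : r < 1 := inv_lt_one_of_one_lt₀ h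
  have hden : ∀ n : ℕ, 0 < α * ((n : ℝ) + 1) - β - 1 := by
    intro n
    have h1 : α ≤ α * ((n : ℝ) + 1) :=
      le_mul_of_one_le_right hα0.le (by have : (0:ℝ) ≤ n := Nat.cast_nonneg n; linarith)
    linarith
  have he : ∀ n : ℕ, β - α * ((n : ℝ) + 1) < -1 := by
    intro n; have := hden n; linarith
  -- value of |a n|
  have habs : ∀ n : ℕ, |a n| =
      t ^ (-((n : ℝ) + 1)) * d ^ (β + 1 - α * ((n : ℝ) + 1)) /
        (α * ((n : ℝ) + 1) - β - 1) := by
    intro n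
    rw [ha, abs_div, abs_mul, abs_mul, abs_pow, abs_neg, abs_one, one_pow, one_mul,
      abs_of_pos (Real.rpow_pos_of_pos ht _), abs_of_pos (Real.rpow_pos_of_pos hd _),
      abs_of_pos (hden n)]
  -- bound |a n| by a geometric series
  have hbound : ∀ n : ℕ, |a n| ≤ (d ^ (β + 1) / (α - β - 1)) * r ^ (n + 1) := by
    intro n
    rw [habs n]
    have hnum : t ^ (-((n : ℝ) + 1)) * d ^ (β + 1 - α * ((n : ℝ) + 1)) =
        d ^ (β + 1) * r ^ (n + 1) := by
      have := rho2_key t d α (β + 1) ht hd n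
      rw [this, hr, inv_pow]
    calc t ^ (-((n : ℝ) + 1)) * d ^ (β + 1 - α * ((n : ℝ) + 1)) /
          (α * ((n : ℝ) + 1) - β - 1)
        ≤ t ^ (-((n : ℝ) + 1)) * d ^ (β + 1 - α * ((n : ℝ) + 1)) / (α - β - 1) := by
          apply div_le_div_of_nonneg_left (by positivity) hαβ
          have h1 : α ≤ α * ((n : ℝ) + 1) :=
            le_mul_of_one_le_right hα0.le
              (by have : (0:ℝ) ≤ n := Nat.cast_nonneg n; linarith)
          linarith
      _ = (d ^ (β + 1) / (α - β - 1)) * r ^ (n + 1) := by rw [hnum]; ring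
  have hsum : Summable fun n : ℕ => |a n| := by
    apply Summable.of_nonneg_of_le (fun n => abs_nonneg _) hbound
    have : Summable fun n : ℕ => (d ^ (β + 1) / (α - β - 1) * r) * r ^ n :=
      (summable_geometric_of_lt_one hr0.le hr1).mul_left _
    exact this.congr fun n => by ring
  -- integrability of each term
  have hFint : ∀ n : ℕ, IntegrableOn (F n) (Set.Ioi d) := by
    intro n
    exact (integrableOn_Ioi_rpow_of_lt (he n) hd).const_mul _
  -- value of each integral
  have hFval : ∀ n : ℕ, ∫ u in Set.Ioi d, F n u = a n := by
    intro n
    rw [hF]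
    simp only
    rw [MeasureTheory.integral_const_mul, integral_Ioi_rpow_of_lt (he n) hd]
    show _ = (-1 : ℝ) ^ n * t ^ (-((n : ℝ) + 1)) * d ^ (β + 1 - α * ((n : ℝ) + 1)) /
      (α * ((n : ℝ) + 1) - β - 1)
    have hE : β - α * ((n : ℝ) + 1) + 1 = β + 1 - α * ((n : ℝ) + 1) := by ring
    have hED : β + 1 - α * ((n : ℝ) + 1) = -(α * ((n : ℝ) + 1) - β - 1) := by ring
    rw [hE, hED, neg_div_neg_eq, mul_div_assoc]
  -- value of each norm integral
  have hFnorm : ∀ n : ℕ, ∫ u in Set.Ioi d, ‖F n u‖ = |a n| := by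
    intro n
    have heq : ∀ u ∈ Set.Ioi d, ‖F n u‖ =
        t ^ (-((n : ℝ) + 1)) * u ^ (β - α * ((n : ℝ) + 1)) := by
      intro u hu
      have hu0 : 0 < u := hd.trans hu
      rw [hF]
      simp only [Real.norm_eq_abs, abs_mul, abs_pow, abs_neg, abs_one, one_pow, one_mul,
        abs_of_pos (Real.rpow_pos_of_pos ht _), abs_of_pos (Real.rpow_pos_of_pos hu0 _)]
    rw [setIntegral_congr_fun measurableSet_Ioi heq, MeasureTheory.integral_const_mul,
      integral_Ioi_rpow_of_lt (he n) hd, habs n]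
    have hE : β - α * ((n : ℝ) + 1) + 1 = β + 1 - α * ((n : ℝ) + 1) := by ring
    have hED : β + 1 - α * ((n : ℝ) + 1) = -(α * ((n : ℝ) + 1) - β - 1) := by ring
    rw [hE, hED, neg_div_neg_eq, mul_div_assoc]
  -- pointwise identity on Ioi d
  have hpt : ∀ u ∈ Set.Ioi d, u ^ β / (1 + t * u ^ α) = ∑' n : ℕ, F n u := by
    intro u hu
    have hu0 : 0 < u := hd.trans hu
    have hy : 1 < t * u ^ α := by
      have : d ^ α ≤ u ^ α := Real.rpow_le_rpow hd.le (le_of_lt hu) hα0.le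
      calc (1:ℝ) < t * d ^ α := h
        _ ≤ t * u ^ α := by nlinarith
    set y : ℝ := t * u ^ α with hy'
    have hy0 : 0 < y := lt_trans one_pos hy
    set x : ℝ := y⁻¹ with hx'
    have hx0 : 0 < x := inv_pos.mpr hy0
    have hx1 : x < 1 := inv_lt_one_of_one_lt₀ hy
    have hterm : ∀ n : ℕ, F n u = (u ^ β * x) * (-x) ^ n := by
      intro n
      rw [hF]
      simp only
      rw [mul_assoc, rho2_key t u α β ht hu0 n, hx', hy',
        neg_pow ((t * u ^ α)⁻¹) n, inv_pow, pow_succ, mul_inv]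
      ring
    rw [tsum_congr hterm, tsum_mul_left, tsum_geometric_of_norm_lt_one (ξ := -x)
      (by rw [norm_neg, Real.norm_eq_abs, abs_of_pos hx0]; exact hx1)]
    rw [sub_neg_eq_add]
    rw [hx']
    field_simp
    exact add_comm y 1
  refine ⟨hsum, ?_⟩
  calc ∫ u in Set.Ioi d, u ^ β / (1 + t * u ^ α)
      = ∫ u in Set.Ioi d, ∑' n : ℕ, F n u := setIntegral_congr_fun measurableSet_Ioi hpt
    _ = ∑' n : ℕ, ∫ u in Set.Ioi d, F n u := by
        refine (MeasureTheory.integral_tsum_of_summable_integral_norm hFint ?_).symm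
        exact hsum.congr fun n => (hFnorm n).symm
    _ = ∑' n : ℕ, a n := tsum_congr hFval
end

section
/- Let λ, d₁, A_L, A_N, α_L, α_N be positive real numbers with A_N/A_L ≤ d₁^{α_N − α_L}. Define r₁(r) = (A_N/A_L)^{1/α_N}·r^{α_L/α_N}, r₂(r) = (A_L/A_N)^{1/α_L}·r^{α_N/α_L}, and y₁ = d₁^{α_L/α_N}·(A_N/A_L)^{1/α_N}. Define f_L(r) = 2πλr·(1 − r/d₁)·exp(−πλr² + (2πλ/(3d₁))(r³ − r₁(r)³)) for 0 < r ≤ d₁, and f_N(r) = 2πλr·(r/d₁)·exp(−πλr₂(r)² + (2πλ/(3d₁))(r₂(r)³ − r³)) for 0 < r ≤ y₁, f_N(r) = 2πλr·(r/d₁)·exp(−πλd₁²/3 − 2πλr³/(3d₁)) for y₁ < r ≤ d₁, and f_N(r) = 2πλr·exp(−πλr²) for r > d₁. Then ∫_0^{d₁} f_L(r) dr + ∫_0^∞ f_N(r) dr = 1. (That is, the paper's serving-distance densities for LoS and NLoS association in the 3GPP case with linear LoS probability together form a probability density.) -/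
open MeasureTheory
open Set Filter Topology

lemma hasDerivAt_if_le {d : ℝ} {f g f' g' : ℝ → ℝ}
    (hf : ∀ x, HasDerivAt f (f' x) x) (hg : ∀ x, HasDerivAt g (g' x) x)
    (heq : f d = g d) (heq' : f' d = g' d) (x : ℝ) :
    HasDerivAt (fun y => if y ≤ d then f y else g y)
      (if x ≤ d then f' x else g' x) x := by
  rcases lt_trichotomy x d with h | h | h
  · rw [if_pos h.le]
    refine (hf x).congr_of_eventuallyEq ?_
    filter_upwards [Iio_mem_nhds h] with y hy
    rw [if_pos (le_of_lt hy)]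
  · subst h
    rw [if_pos le_rfl]
    have h1 : HasDerivWithinAt (fun y => if y ≤ x then f y else g y) (f' x) (Iic x) x := by
      refine (hf x).hasDerivWithinAt.congr (fun y hy => ?_) (by rw [if_pos le_rfl])
      rw [if_pos (mem_Iic.mp hy)]
    have h2 : HasDerivWithinAt (fun y => if y ≤ x then f y else g y) (f' x) (Ici x) x := by
      rw [heq']
      refine (hg x).hasDerivWithinAt.congr (fun y hy => ?_) (by rw [if_pos le_rfl]; exact heq)
      rcases eq_or_lt_of_le (mem_Ici.mp hy) with h | hy'
      · rw [← h, if_pos le_rfl]; exact heq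
      · rw [if_neg (not_le.mpr hy')]
    have h3 := h1.union h2
    rw [Iic_union_Ici] at h3
    exact hasDerivWithinAt_univ.mp h3
  · rw [if_neg (not_le.mpr h)]
    refine (hg x).congr_of_eventuallyEq ?_
    filter_upwards [Ioi_mem_nhds h] with y hy
    rw [if_neg (not_le.mpr hy)]

lemma aux_main (lam d₁ k k2 p q : ℝ)
    (hlam : 0 < lam) (hd₁ : 0 < d₁) (hk : 0 < k) (hk2 : 0 < k2)
    (hp : 0 < p) (hq : 0 < q)
    (hkk2 : ∀ x : ℝ, 0 < x → k2 * (k * x ^ p) ^ q = x)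
    (hy : k * d₁ ^ p ≤ d₁) :
    (∫ r in (0:ℝ)..d₁,
        2 * Real.pi * lam * r * (1 - r / d₁) *
          Real.exp (-(Real.pi * lam * r ^ 2) +
            (2 * Real.pi * lam / (3 * d₁)) * (r ^ 3 - (k * r ^ p) ^ 3))) +
      (∫ r in Set.Ioi (0:ℝ),
        if r ≤ d₁ ^ p * k then
          2 * Real.pi * lam * r * (r / d₁) *
            Real.exp (-(Real.pi * lam * (k2 * r ^ q) ^ 2) +
              (2 * Real.pi * lam / (3 * d₁)) * ((k2 * r ^ q) ^ 3 - r ^ 3))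
        else if r ≤ d₁ then
          2 * Real.pi * lam * r * (r / d₁) *
            Real.exp (-(Real.pi * lam * d₁ ^ 2 / 3) -
              2 * Real.pi * lam * r ^ 3 / (3 * d₁))
        else
          2 * Real.pi * lam * r * Real.exp (-(Real.pi * lam * r ^ 2))) = 1 := by
  have hπ := Real.pi_pos
  have hd₁' : d₁ ≠ 0 := hd₁.ne'
  set fL : ℝ → ℝ := fun r =>
    2 * Real.pi * lam * r * (1 - r / d₁) *
      Real.exp (-(Real.pi * lam * r ^ 2) +
        (2 * Real.pi * lam / (3 * d₁)) * (r ^ 3 - (k * r ^ p) ^ 3)) with hfLdef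
  set fN : ℝ → ℝ := fun r =>
    if r ≤ d₁ ^ p * k then
      2 * Real.pi * lam * r * (r / d₁) *
        Real.exp (-(Real.pi * lam * (k2 * r ^ q) ^ 2) +
          (2 * Real.pi * lam / (3 * d₁)) * ((k2 * r ^ q) ^ 3 - r ^ 3))
    else if r ≤ d₁ then
      2 * Real.pi * lam * r * (r / d₁) *
        Real.exp (-(Real.pi * lam * d₁ ^ 2 / 3) -
          2 * Real.pi * lam * r ^ 3 / (3 * d₁))
    else
      2 * Real.pi * lam * r * Real.exp (-(Real.pi * lam * r ^ 2)) with hfNdef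
  set ΛL : ℝ → ℝ := fun r =>
    if r ≤ d₁ then Real.pi * lam * r ^ 2 - 2 * Real.pi * lam / (3 * d₁) * r ^ 3
    else Real.pi * lam * d₁ ^ 2 / 3 with hΛLdef
  set ΛL' : ℝ → ℝ := fun r =>
    if r ≤ d₁ then 2 * Real.pi * lam * r - 2 * Real.pi * lam / d₁ * r ^ 2
    else 0 with hΛL'def
  set ΛN : ℝ → ℝ := fun s =>
    if s ≤ d₁ then 2 * Real.pi * lam / (3 * d₁) * s ^ 3
    else Real.pi * lam * s ^ 2 - Real.pi * lam * d₁ ^ 2 / 3 with hΛNdef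
  set ΛN' : ℝ → ℝ := fun s =>
    if s ≤ d₁ then 2 * Real.pi * lam / d₁ * s ^ 2 else 2 * Real.pi * lam * s with hΛN'def
  set H : ℝ → ℝ := fun r => Real.exp (-(ΛL r) - ΛN (k * r ^ p)) with hHdef
  set G : ℝ → ℝ := fun r => -(H r) with hGdef
  set g : ℝ → ℝ := fun x => k * p * x ^ (p - 1) * fN (k * x ^ p) with hgdef
  set φ : ℝ → ℝ := fun x => (Ioc (0:ℝ) d₁).indicator fL x + g x with hφdef
  -- derivative of ΛL
  have dΛL : ∀ x, HasDerivAt ΛL (ΛL' x) x := by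
    intro x
    refine hasDerivAt_if_le
      (f := fun r => Real.pi * lam * r ^ 2 - 2 * Real.pi * lam / (3 * d₁) * r ^ 3)
      (g := fun _ => Real.pi * lam * d₁ ^ 2 / 3)
      (f' := fun r => 2 * Real.pi * lam * r - 2 * Real.pi * lam / d₁ * r ^ 2)
      (g' := fun _ => 0) ?_ ?_ ?_ ?_ x
    · intro y
      have h := ((hasDerivAt_pow 2 y).const_mul (Real.pi * lam)).sub
        ((hasDerivAt_pow 3 y).const_mul (2 * Real.pi * lam / (3 * d₁)))
      refine h.congr_deriv ?_
      field_simp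
      ring
    · exact fun y => hasDerivAt_const y _
    · field_simp; ring
    · field_simp; ring
  have dΛN : ∀ x, HasDerivAt ΛN (ΛN' x) x := by
    intro x
    refine hasDerivAt_if_le
      (f := fun s => 2 * Real.pi * lam / (3 * d₁) * s ^ 3)
      (g := fun s => Real.pi * lam * s ^ 2 - Real.pi * lam * d₁ ^ 2 / 3)
      (f' := fun s => 2 * Real.pi * lam / d₁ * s ^ 2)
      (g' := fun s => 2 * Real.pi * lam * s) ?_ ?_ ?_ ?_ x
    · intro y
      have h := (hasDerivAt_pow 3 y).const_mul (2 * Real.pi * lam / (3 * d₁))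
      refine h.congr_deriv ?_
      field_simp
      ring
    · intro y
      have h := ((hasDerivAt_pow 2 y).const_mul (Real.pi * lam)).sub_const
        (Real.pi * lam * d₁ ^ 2 / 3)
      refine h.congr_deriv ?_
      ring
    · field_simp; ring
    · field_simp
  -- derivative of H and G
  have dH : ∀ x ∈ Ioi (0:ℝ), HasDerivAt H
      (-(ΛL' x + ΛN' (k * x ^ p) * (k * (p * x ^ (p - 1)))) * H x) x := by
    intro x hx
    have hx0 : (0:ℝ) < x := hx
    have hA : HasDerivAt (fun r : ℝ => k * r ^ p) (k * (p * x ^ (p - 1))) x :=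
      (Real.hasDerivAt_rpow_const (Or.inl hx0.ne')).const_mul k
    have h1 := HasDerivAt.comp x (dΛN (k * x ^ p)) hA
    have h2 := ((dΛL x).neg.sub h1).exp
    refine h2.congr_deriv ?_
    simp only [hHdef, Function.comp_def, Pi.sub_apply, Pi.neg_apply]
    ring
  have hderivG : ∀ x ∈ Ioi (0:ℝ), HasDerivAt G (φ x) x := by
    intro x hx
    have hx0 : (0:ℝ) < x := hx
    have h := (dH x hx).neg
    refine h.congr_deriv ?_
    -- φ x = (ΛL' x + ΛN' (k * x ^ p) * (k * (p * x ^ (p - 1)))) * H x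
    have hkxp : (0:ℝ) < k * x ^ p := by positivity
    by_cases hxd : x ≤ d₁
    · have hxp : x ^ p ≤ d₁ ^ p := Real.rpow_le_rpow hx0.le hxd hp.le
      have h1 : k * x ^ p ≤ d₁ ^ p * k := by
        rw [mul_comm k]
        exact mul_le_mul_of_nonneg_right hxp hk.le
      have h2 : k * x ^ p ≤ d₁ := le_trans (mul_le_mul_of_nonneg_left hxp hk.le) hy
      have h3 : k2 * (k * x ^ p) ^ q = x := hkk2 x hx0
      simp only [hφdef, hgdef, hfLdef, hfNdef, hHdef, hΛLdef, hΛL'def, hΛNdef, hΛN'def]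
      rw [Set.indicator_of_mem (mem_Ioc.mpr ⟨hx0, hxd⟩), if_pos h1, if_pos hxd, if_pos hxd,
        if_pos h2, if_pos h2, h3]
      rw [show -(Real.pi * lam * x ^ 2 - 2 * Real.pi * lam / (3 * d₁) * x ^ 3) -
            2 * Real.pi * lam / (3 * d₁) * (k * x ^ p) ^ 3
          = -(Real.pi * lam * x ^ 2) +
            2 * Real.pi * lam / (3 * d₁) * (x ^ 3 - (k * x ^ p) ^ 3) from by ring]
      generalize Real.exp (-(Real.pi * lam * x ^ 2) +
        2 * Real.pi * lam / (3 * d₁) * (x ^ 3 - (k * x ^ p) ^ 3)) = E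
      generalize hA : (k : ℝ) * x ^ p = A
      field_simp
    · have hdx : d₁ < x := not_le.mp hxd
      have h4 : ¬ (k * x ^ p ≤ d₁ ^ p * k) := by
        rw [not_le, mul_comm k]
        exact mul_lt_mul_of_pos_right (Real.rpow_lt_rpow hd₁.le hdx hp) hk
      have hnot : x ∉ Ioc (0:ℝ) d₁ := fun hmem => hxd hmem.2
      simp only [hφdef, hgdef, hfNdef, hHdef, hΛLdef, hΛL'def, hΛNdef, hΛN'def]
      rw [Set.indicator_of_notMem hnot, if_neg h4, if_neg hxd, if_neg hxd]
      by_cases h5 : k * x ^ p ≤ d₁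
      · rw [if_pos h5, if_pos h5, if_pos h5]
        rw [show -(Real.pi * lam * d₁ ^ 2 / 3) -
              2 * Real.pi * lam / (3 * d₁) * (k * x ^ p) ^ 3
            = -(Real.pi * lam * d₁ ^ 2 / 3) -
              2 * Real.pi * lam * (k * x ^ p) ^ 3 / (3 * d₁) from by ring]
        generalize Real.exp (-(Real.pi * lam * d₁ ^ 2 / 3) -
          2 * Real.pi * lam * (k * x ^ p) ^ 3 / (3 * d₁)) = E
        generalize hA : (k : ℝ) * x ^ p = A
        field_simp
        ring
      · rw [if_neg h5, if_neg h5, if_neg h5]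
        rw [show -(Real.pi * lam * d₁ ^ 2 / 3) -
              (Real.pi * lam * (k * x ^ p) ^ 2 - Real.pi * lam * d₁ ^ 2 / 3)
            = -(Real.pi * lam * (k * x ^ p) ^ 2) from by ring]
        generalize Real.exp (-(Real.pi * lam * (k * x ^ p) ^ 2)) = E
        generalize hA : (k : ℝ) * x ^ p = A
        ring
  -- nonnegativity of φ
  have hφnonneg : ∀ x ∈ Ioi (0:ℝ), 0 ≤ φ x := by
    intro x hx
    have hx0 : (0:ℝ) < x := hx
    have hind : 0 ≤ (Ioc (0:ℝ) d₁).indicator fL x := by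
      refine Set.indicator_nonneg (fun y hy => ?_) x
      have hy1 : (0:ℝ) < y := hy.1
      have hy2 : y / d₁ ≤ 1 := (div_le_one hd₁).mpr hy.2
      simp only [hfLdef]
      have : 0 ≤ 1 - y / d₁ := by linarith
      positivity
    have hfNn : 0 ≤ fN (k * x ^ p) := by
      have hkxp : (0:ℝ) < k * x ^ p := by positivity
      simp only [hfNdef]
      split_ifs <;> positivity
    have hgn : 0 ≤ g x := by
      simp only [hgdef]
      have hxp1 : (0:ℝ) ≤ x ^ (p - 1) := Real.rpow_nonneg hx0.le _
      have : (0:ℝ) ≤ k * p * x ^ (p - 1) := by positivity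
      exact mul_nonneg this hfNn
    simp only [hφdef]
    exact add_nonneg hind hgn
  -- limit of G at infinity
  have hAtop : Tendsto (fun r : ℝ => k * r ^ p) atTop atTop :=
    (tendsto_rpow_atTop hp).const_mul_atTop hk
  have hΛNtop : Tendsto ΛN atTop atTop := by
    have h1 : Tendsto (fun s : ℝ => Real.pi * lam * s ^ 2 - Real.pi * lam * d₁ ^ 2 / 3)
        atTop atTop := by
      apply tendsto_atTop_add_const_right
      exact (tendsto_pow_atTop (two_ne_zero)).const_mul_atTop (by positivity)
    refine Tendsto.congr' ?_ h1
    filter_upwards [eventually_gt_atTop d₁] with s hs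
    simp only [hΛNdef]
    rw [if_neg (not_le.mpr hs)]
  have hinner : Tendsto (fun r => -(ΛL r) - ΛN (k * r ^ p)) atTop atBot := by
    have h3 : Tendsto (fun r => -(ΛN (k * r ^ p))) atTop atBot :=
      tendsto_neg_atTop_atBot.comp (hΛNtop.comp hAtop)
    have h2 : ∀ᶠ r in atTop, -(ΛL r) ≤ 0 := by
      filter_upwards [eventually_gt_atTop d₁] with r hr
      simp only [hΛLdef]
      rw [if_neg (not_le.mpr hr)]
      have h0 : (0:ℝ) ≤ Real.pi * lam * d₁ ^ 2 / 3 := by positivity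
      linarith
    have := tendsto_atBot_add_left_of_ge' atTop (0:ℝ) h2 h3
    simpa [sub_eq_add_neg] using this
  have hGtends : Tendsto G atTop (𝓝 0) := by
    have hH : Tendsto H atTop (𝓝 0) := by
      rw [hHdef]
      exact Real.tendsto_exp_atBot.comp hinner
    rw [hGdef]
    simpa using hH.neg
  -- continuity of G at 0 from the right
  have hcontG : ContinuousWithinAt G (Ici (0:ℝ)) 0 := by
    have hΛLc : Continuous ΛL := continuous_iff_continuousAt.mpr fun x => (dΛL x).continuousAt
    have hΛNc : Continuous ΛN := continuous_iff_continuousAt.mpr fun x => (dΛN x).continuousAt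
    have hrp : ContinuousAt (fun r : ℝ => k * r ^ p) 0 :=
      (Real.continuousAt_rpow_const 0 p (Or.inr hp.le)).const_mul k
    have hHc : ContinuousAt H 0 := by
      apply Real.continuous_exp.continuousAt.comp
      exact (hΛLc.continuousAt.neg.sub (hΛNc.continuousAt.comp hrp))
    exact hHc.neg.continuousWithinAt
  -- value of G at 0
  have hG0 : G 0 = -1 := by
    simp only [hGdef, hHdef, hΛLdef, hΛNdef]
    rw [Real.zero_rpow hp.ne', mul_zero, if_pos hd₁.le, if_pos hd₁.le]
    norm_num
  -- the main FTC computation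
  have key : ∫ x in Ioi (0:ℝ), φ x = 0 - G 0 :=
    integral_Ioi_of_hasDerivAt_of_nonneg hcontG hderivG hφnonneg hGtends
  have hφint : IntegrableOn φ (Ioi (0:ℝ)) :=
    integrableOn_Ioi_deriv_of_nonneg hcontG hderivG hφnonneg hGtends
  -- integrability of the indicator part
  have hfLc : ContinuousOn fL (Icc (0:ℝ) d₁) := by
    have hc1 : ContinuousOn (fun x : ℝ => x ^ p) (Icc (0:ℝ) d₁) := fun x _ =>
      (Real.continuousAt_rpow_const x p (Or.inr hp.le)).continuousWithinAt
    simp only [hfLdef]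
    apply ContinuousOn.mul
    · exact Continuous.continuousOn
        ((continuous_const.mul continuous_id).mul
          (continuous_const.sub (continuous_id.div_const d₁)))
    · apply Real.continuous_exp.comp_continuousOn
      apply ContinuousOn.add
      · exact Continuous.continuousOn (continuous_const.mul (continuous_pow 2)).neg
      · exact continuousOn_const.mul
          ((Continuous.continuousOn (continuous_pow 3)).sub
            ((continuousOn_const.mul hc1).pow 3))
  have hfLint : IntegrableOn fL (Ioc (0:ℝ) d₁) :=
    (hfLc.integrableOn_Icc).mono_set Ioc_subset_Icc_self
  have hindint : IntegrableOn ((Ioc (0:ℝ) d₁).indicator fL) (Ioi (0:ℝ)) :=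
    (hfLint.integrable_indicator measurableSet_Ioc).integrableOn
  have hgint : IntegrableOn g (Ioi (0:ℝ)) := by
    have h : IntegrableOn (fun x => φ x - (Ioc (0:ℝ) d₁).indicator fL x) (Ioi (0:ℝ)) :=
      hφint.sub hindint
    refine IntegrableOn.congr_fun h (fun x _ => ?_) measurableSet_Ioi
    simp only [hφdef]
    ring
  -- change of variables for the NLoS integral
  have hIN : (∫ r in Ioi (0:ℝ), fN r) = ∫ x in Ioi (0:ℝ), g x := by
    have h1 := integral_comp_rpow_Ioi_of_pos (g := fun y => fN (k * y)) hp
    have h2 := integral_comp_mul_left_Ioi fN 0 hk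
    rw [mul_zero] at h2
    calc ∫ r in Ioi (0:ℝ), fN r
        = k • (k⁻¹ • ∫ r in Ioi (0:ℝ), fN r) := by
          rw [smul_smul, mul_inv_cancel₀ hk.ne', one_smul]
      _ = k • ∫ x in Ioi (0:ℝ), fN (k * x) := by rw [← h2]
      _ = k • ∫ x in Ioi (0:ℝ), (p * x ^ (p - 1)) • fN (k * x ^ p) := by rw [h1]
      _ = ∫ x in Ioi (0:ℝ), g x := by
          rw [← integral_smul]
          refine setIntegral_congr_fun measurableSet_Ioi (fun x hx => ?_)
          simp only [hgdef, smul_eq_mul]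
          ring
  -- assembling
  have hind : (∫ x in Ioi (0:ℝ), ((Ioc (0:ℝ) d₁).indicator fL) x)
      = ∫ r in Ioc (0:ℝ) d₁, fL r := by
    rw [setIntegral_indicator measurableSet_Ioc]
    congr 1
    rw [Set.inter_eq_self_of_subset_right Ioc_subset_Ioi_self]
  have hsum : (∫ x in Ioi (0:ℝ), φ x)
      = (∫ x in Ioi (0:ℝ), ((Ioc (0:ℝ) d₁).indicator fL) x) + ∫ x in Ioi (0:ℝ), g x := by
    simp only [hφdef]
    exact integral_add hindint hgint
  rw [intervalIntegral.integral_of_le hd₁.le, hIN, ← hind]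
  rw [← hsum, key, hG0]
  norm_num


/-- The paper's serving-distance densities for LoS and NLoS association in the 3GPP case
with linear LoS probability function together integrate to one:
`∫_0^{d₁} f_L(r) dr + ∫_0^∞ f_N(r) dr = 1`, where
`f_L(r) = 2πλr(1−r/d₁)·exp(−πλr² + (2πλ/(3d₁))(r³ − r₁(r)³))` on `(0, d₁]`, and
`f_N` is given by the three-case formula on `(0, y₁]`, `(y₁, d₁]`, `(d₁, ∞)`. -/
theorem serving_distance_densities_sum_to_one (lam d₁ A_L A_N α_L α_N : ℝ)
    (hlam : 0 < lam) (hd₁ : 0 < d₁) (hAL : 0 < A_L) (hAN : 0 < A_N)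
    (haL : 0 < α_L) (haN : 0 < α_N)
    (hcond : A_N / A_L ≤ d₁ ^ (α_N - α_L)) :
    (∫ r in (0:ℝ)..d₁,
        2 * Real.pi * lam * r * (1 - r / d₁) *
          Real.exp (-(Real.pi * lam * r ^ 2) +
            (2 * Real.pi * lam / (3 * d₁)) *
              (r ^ 3 - ((A_N / A_L) ^ (1 / α_N) * r ^ (α_L / α_N)) ^ 3))) +
      (∫ r in Set.Ioi (0:ℝ),
        if r ≤ d₁ ^ (α_L / α_N) * (A_N / A_L) ^ (1 / α_N) then
          2 * Real.pi * lam * r * (r / d₁) *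
            Real.exp (-(Real.pi * lam * ((A_L / A_N) ^ (1 / α_L) * r ^ (α_N / α_L)) ^ 2) +
              (2 * Real.pi * lam / (3 * d₁)) *
                (((A_L / A_N) ^ (1 / α_L) * r ^ (α_N / α_L)) ^ 3 - r ^ 3))
        else if r ≤ d₁ then
          2 * Real.pi * lam * r * (r / d₁) *
            Real.exp (-(Real.pi * lam * d₁ ^ 2 / 3) -
              2 * Real.pi * lam * r ^ 3 / (3 * d₁))
        else
          2 * Real.pi * lam * r * Real.exp (-(Real.pi * lam * r ^ 2))) = 1 := by
  
  have hANL : 0 < A_N / A_L := div_pos hAN hAL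
  have hALN : 0 < A_L / A_N := div_pos hAL hAN
  have hk : 0 < (A_N / A_L) ^ (1 / α_N) := Real.rpow_pos_of_pos hANL _
  have hk2 : 0 < (A_L / A_N) ^ (1 / α_L) := Real.rpow_pos_of_pos hALN _
  have hp : 0 < α_L / α_N := div_pos haL haN
  have hq : 0 < α_N / α_L := div_pos haN haL
  have hkk2 : ∀ x : ℝ, 0 < x →
      (A_L / A_N) ^ (1 / α_L) *
        ((A_N / A_L) ^ (1 / α_N) * x ^ (α_L / α_N)) ^ (α_N / α_L) = x := by
    intro x hx
    rw [Real.mul_rpow hk.le (Real.rpow_nonneg hx.le _), ← Real.rpow_mul hANL.le,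
      ← Real.rpow_mul hx.le]
    rw [show 1 / α_N * (α_N / α_L) = 1 / α_L from by field_simp,
      show α_L / α_N * (α_N / α_L) = 1 from by field_simp, Real.rpow_one,
      ← mul_assoc, ← Real.mul_rpow hALN.le hANL.le,
      show A_L / A_N * (A_N / A_L) = 1 from by field_simp, Real.one_rpow, one_mul]
  have hy : (A_N / A_L) ^ (1 / α_N) * d₁ ^ (α_L / α_N) ≤ d₁ := by
    have h1 : (A_N / A_L) ^ (1 / α_N) ≤ (d₁ ^ (α_N - α_L)) ^ (1 / α_N) :=
      Real.rpow_le_rpow hANL.le hcond (by positivity)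
    have h2 : (d₁ ^ (α_N - α_L)) ^ (1 / α_N) = d₁ ^ ((α_N - α_L) * (1 / α_N)) :=
      (Real.rpow_mul hd₁.le _ _).symm
    calc (A_N / A_L) ^ (1 / α_N) * d₁ ^ (α_L / α_N)
        ≤ d₁ ^ ((α_N - α_L) * (1 / α_N)) * d₁ ^ (α_L / α_N) := by
          rw [← h2]
          exact mul_le_mul_of_nonneg_right h1 (Real.rpow_nonneg hd₁.le _)
      _ = d₁ ^ ((α_N - α_L) * (1 / α_N) + α_L / α_N) := (Real.rpow_add hd₁ _ _).symm
      _ = d₁ ^ (1:ℝ) := by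
          congr 1
          field_simp
          ring
      _ = d₁ := Real.rpow_one d₁
  exact aux_main lam d₁ ((A_N / A_L) ^ (1 / α_N)) ((A_L / A_N) ^ (1 / α_L))
    (α_L / α_N) (α_N / α_L) hlam hd₁ hk hk2 hp hq hkk2 hy
end
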